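/- The canonical RFA of a regular language L accepts exactly L. -/

import Mathlib

def res {α : Type*} (L : Set (List α)) (u : List α) : Set (List α) := {v | u ++ v ∈ L}

def Res {α : Type*} (L : Set (List α)) : Set (Set (List α)) := {L' | ∃ u, L' = res L u}

/-- A language is prime in a class `𝕃` if it belongs to `𝕃` and is not the union of the
languages of `𝕃` strictly contained in it. -/
def IsPrimeIn {α : Type*} (𝕃 : Set (Set (List α))) (L : Set (List α)) : Prop :=
  L ∈ 𝕃 ∧ L ≠ ⋃₀ {L' | L' ∈ 𝕃 ∧ L' ⊂ L}

def IsRegularLang {α : Type*} (L : Set (List α)) : Prop :=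
  ∃ (σ : Type) (_ : Fintype σ) (M : DFA α σ), ∀ w, w ∈ M.accepts ↔ w ∈ L

/-- The canonical RFA of a language `L`: states are the prime residual languages of `L`. -/
def canonicalRFA {α : Type*} (L : Set (List α)) :
    NFA α {L' : Set (List α) // IsPrimeIn (Res L) L'} where
  step q a := {q' | q'.1 ⊆ res q.1 [a]}
  start := {q | q.1 ⊆ L}
  accept := {q | [] ∈ q.1}

/-- The language accepted from a single state `q` of an NFA. -/
def lq {α σ : Type*} (M : NFA α σ) (q : σ) : Set (List α) :=
  {w | (M.evalFrom {q} w ∩ M.accept).Nonempty}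

lemma res_res {α : Type*} (L : Set (List α)) (u v : List α) :
    res (res L u) v = res L (u ++ v) := by
  ext w; simp [res, List.append_assoc]

lemma res_finite {α : Type*} {L : Set (List α)} (hreg : IsRegularLang L) : (Res L).Finite := by
  obtain ⟨σ, hσ, M, hM⟩ := hreg
  have hsub : Res L ⊆ Set.range (fun s : σ => {v | M.evalFrom s v ∈ M.accept}) := by
    rintro _ ⟨u, rfl⟩
    refine ⟨M.eval u, ?_⟩
    ext v
    simp only [Set.mem_setOf_eq, res]
    rw [← hM, DFA.mem_accepts, DFA.eval, DFA.evalFrom_of_append]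
  exact (Set.finite_range _).subset hsub

lemma prime_cover {α : Type*} {L : Set (List α)} (hfin : (Res L).Finite) :
    ∀ L' ∈ Res L, ∀ v ∈ L', ∃ P, IsPrimeIn (Res L) P ∧ P ⊆ L' ∧ v ∈ P := by
  classical
  intro L' hL'
  generalize hn : (hfin.toFinset.filter (· ⊆ L')).card = n
  induction n using Nat.strong_induction_on generalizing L' with
  | _ n ih =>
    intro v hv
    by_cases hp : IsPrimeIn (Res L) L'
    · exact ⟨L', hp, subset_rfl, hv⟩
    · have heq : L' = ⋃₀ {L'' | L'' ∈ Res L ∧ L'' ⊂ L'} := by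
        rcases not_and_or.mp hp with h | h
        · exact absurd hL' h
        · exact not_not.mp h
      have hv' : v ∈ ⋃₀ {L'' | L'' ∈ Res L ∧ L'' ⊂ L'} := heq ▸ hv
      obtain ⟨L'', ⟨hL''R, hL''ss⟩, hvL''⟩ := hv'
      have hcard : (hfin.toFinset.filter (· ⊆ L'')).card < n := by
        subst hn
        apply Finset.card_lt_card
        constructor
        · intro x hx
          simp only [Finset.mem_filter] at *
          exact ⟨hx.1, hx.2.trans hL''ss.subset⟩
        · intro hsub
          have h1 : L' ∈ hfin.toFinset.filter (· ⊆ L') := by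
            simp [Set.Finite.mem_toFinset, hL']
          have h2 := hsub h1
          simp only [Finset.mem_filter] at h2
          exact hL''ss.not_subset h2.2
      obtain ⟨P, hP, hPsub, hvP⟩ := ih _ hcard L'' hL''R rfl v hvL''
      exact ⟨P, hP, hPsub.trans hL''ss.subset, hvP⟩

lemma mem_evalFrom_iff {α σ : Type*} (M : NFA α σ) (S : Set σ) (w : List α) (q' : σ) :
    q' ∈ M.evalFrom S w ↔ ∃ q ∈ S, q' ∈ M.evalFrom {q} w := by
  induction w generalizing S with
  | nil => simp [NFA.evalFrom]
  | cons a w ih =>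
    rw [show M.evalFrom S (a::w) = M.evalFrom (M.stepSet S a) w from rfl, ih]
    constructor
    · rintro ⟨q'', hq'', h⟩
      rw [NFA.mem_stepSet] at hq''
      obtain ⟨q, hq, hstep⟩ := hq''
      refine ⟨q, hq, ?_⟩
      rw [show M.evalFrom {q} (a::w) = M.evalFrom (M.stepSet {q} a) w from rfl, ih]
      exact ⟨q'', by rw [NFA.mem_stepSet]; exact ⟨q, rfl, hstep⟩, h⟩
    · rintro ⟨q, hq, h⟩
      rw [show M.evalFrom {q} (a::w) = M.evalFrom (M.stepSet {q} a) w from rfl, ih] at h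
      obtain ⟨q'', hq'', h⟩ := h
      rw [NFA.mem_stepSet] at hq''
      obtain ⟨q₀, hq₀, hstep⟩ := hq''
      rw [Set.mem_singleton_iff] at hq₀; subst hq₀
      exact ⟨q'', NFA.mem_stepSet.mpr ⟨_, hq, hstep⟩, h⟩

lemma sound_aux {α : Type*} (L : Set (List α)) :
    ∀ (w : List α) (q q' : {L' : Set (List α) // IsPrimeIn (Res L) L'}),
      q' ∈ (canonicalRFA L).evalFrom {q} w → [] ∈ q'.1 → w ∈ q.1 := by
  intro w
  induction w with
  | nil =>
    intro q q' h hq'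
    simp only [NFA.evalFrom, List.foldl_nil, Set.mem_singleton_iff] at h
    subst h; exact hq'
  | cons a w ih =>
    intro q q' h hq'
    rw [show (canonicalRFA L).evalFrom {q} (a::w) =
        (canonicalRFA L).evalFrom ((canonicalRFA L).stepSet {q} a) w from rfl,
      mem_evalFrom_iff] at h
    obtain ⟨q'', hq'', h⟩ := h
    rw [NFA.mem_stepSet] at hq''
    obtain ⟨q₀, hq₀, hstep⟩ := hq''
    rw [Set.mem_singleton_iff] at hq₀; subst hq₀
    have hw : w ∈ q''.1 := ih q'' q' h hq'
    exact hstep hw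

lemma complete_aux {α : Type*} (L : Set (List α)) (hfin : (Res L).Finite) :
    ∀ (w : List α) (q : {L' : Set (List α) // IsPrimeIn (Res L) L'}), w ∈ q.1 →
      ∃ q' ∈ (canonicalRFA L).evalFrom {q} w, [] ∈ q'.1 := by
  intro w
  induction w with
  | nil =>
    intro q hw
    exact ⟨q, by simp [NFA.evalFrom], hw⟩
  | cons a w ih =>
    intro q hw
    have hres : res q.1 [a] ∈ Res L := by
      obtain ⟨u, hu⟩ := q.2.1
      exact ⟨u ++ [a], by rw [hu, res_res]⟩
    have hwmem : w ∈ res q.1 [a] := hw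
    obtain ⟨P, hP, hPsub, hwP⟩ := prime_cover hfin _ hres w hwmem
    obtain ⟨q', hq', hacc⟩ := ih ⟨P, hP⟩ hwP
    refine ⟨q', ?_, hacc⟩
    rw [show (canonicalRFA L).evalFrom {q} (a::w) =
        (canonicalRFA L).evalFrom ((canonicalRFA L).stepSet {q} a) w from rfl,
      mem_evalFrom_iff]
    refine ⟨⟨P, hP⟩, ?_, hq'⟩
    rw [NFA.mem_stepSet]
    exact ⟨q, rfl, hPsub⟩

theorem canonicalRFA_accepts {α : Type*} (L : Set (List α)) (hreg : IsRegularLang L) :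
    ∀ w, w ∈ (canonicalRFA L).accepts ↔ w ∈ L := by
  have hfin := res_finite hreg
  intro w
  rw [NFA.mem_accepts]
  constructor
  · rintro ⟨q', hq', hmem⟩
    rw [mem_evalFrom_iff] at hmem
    obtain ⟨q, hq, hmem⟩ := hmem
    have hw : w ∈ q.1 := sound_aux L w q q' hmem hq'
    exact hq hw
  · intro hw
    have hLres : L ∈ Res L := ⟨[], by ext v; simp [res]⟩
    obtain ⟨P, hP, hPsub, hwP⟩ := prime_cover hfin L hLres w hw
    obtain ⟨q', hq', hacc⟩ := complete_aux L hfin w ⟨P, hP⟩ hwP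
    refine ⟨q', hacc, ?_⟩
    rw [mem_evalFrom_iff]
    exact ⟨⟨P, hP⟩, hPsub, hq'⟩
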